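/- Let Θ be an equivalence from the category of left M₂ⁿˢ(ℤ)-sets to itself. Then G∘Θ is naturally isomorphic to G, where G is the forgetful functor to Set. -/

import Mathlib

noncomputable section
open Matrix

/-- 2×2 integer matrices. -/
abbrev M2Z : Type := Matrix (Fin 2) (Fin 2) ℤ

/-- The multiplicative monoid `M₂ⁿˢ(ℤ)` of 2×2 integer matrices with nonzero determinant. -/
def Mns : Submonoid M2Z where
  carrier := {a | a.det ≠ 0}
  one_mem' := by simp
  mul_mem' := by
    intro a b ha hb
    simp only [Set.mem_setOf_eq, Matrix.det_mul] at *
    exact mul_ne_zero ha hb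

open CategoryTheory

/-- The only idempotent of `Mns` is `1`. -/
lemma Mns.idem_eq_one (e : ↥Mns) (h : e * e = e) : e = 1 := by
  have hme : (e : M2Z) * (e : M2Z) = (e : M2Z) := congrArg Subtype.val h
  have hdet : ((e : M2Z).det) * ((e : M2Z).det) = (e : M2Z).det := by
    have := congrArg Matrix.det hme
    rwa [Matrix.det_mul] at this
  have hd1 : (e : M2Z).det = 1 :=
    mul_right_cancel₀ e.2 (by rw [hdet, one_mul] :
      (e:M2Z).det * (e:M2Z).det = 1 * (e:M2Z).det)
  have hu : IsUnit (e : M2Z) :=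
    (Matrix.isUnit_iff_isUnit_det _).mpr (by rw [hd1]; exact isUnit_one)
  exact Subtype.ext (hu.mul_left_cancel (by rw [hme]; simp))

namespace EquivMnsAux

abbrev Cc : Type 1 := Action (Type 0) (MonCat.of Mns)

/-- Left multiplication as a monoid hom into type-endomorphisms. -/
def AAρ : ↥Mns →* CategoryTheory.End (↥Mns : Type 0) where
  toFun m := TypeCat.ofHom (fun x => m * x)
  map_one' := by refine ConcreteCategory.hom_ext _ _ (fun x => ?_); exact one_mul x
  map_mul' m n := by refine ConcreteCategory.hom_ext _ _ (fun x => ?_); exact mul_assoc m n x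

/-- The left regular act. -/
abbrev AA : Cc := ⟨↥Mns, AAρ⟩

lemma AA_ρ_apply (g x : ↥Mns) : AA.ρ g x = g * x := rfl

lemma hom_comm_apply {X Y : Cc} (f : X ⟶ Y) (m : ↥Mns) (x : X.V) :
    f.hom (X.ρ m x) = Y.ρ m (f.hom x) := by
  have := ConcreteCategory.congr_hom (f.comm m) x
  simpa using this

lemma mk_comm (X : Cc) (x : X.V) (g : ↥Mns) :
    AAρ g ≫ TypeCat.ofHom (fun m : ↥Mns => X.ρ m x) = TypeCat.ofHom (fun m : ↥Mns => X.ρ m x) ≫ X.ρ g := by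
  refine ConcreteCategory.hom_ext _ _ (fun m => ?_)
  show X.ρ (g * m) x = X.ρ g (X.ρ m x)
  rw [X.ρ.map_mul]
  rfl

/-- The orbit map `AA ⟶ X` determined by a point `x : X.V`. -/
def mk (X : Cc) (x : X.V) : AA ⟶ X where
  hom := TypeCat.ofHom fun m : ↥Mns => X.ρ m x
  comm := mk_comm X x

lemma mk_hom_one (X : Cc) (x : X.V) : (mk X x).hom 1 = x := by
  show X.ρ 1 x = x
  rw [Action.ρ_one]
  rfl

lemma mk_eval {X : Cc} (f : AA ⟶ X) : mk X (f.hom 1) = f := by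
  apply Action.hom_ext
  refine ConcreteCategory.hom_ext _ _ (fun m => ?_)
  have h := hom_comm_apply f m 1
  have h1 : AA.ρ m 1 = m := mul_one m
  rw [h1] at h
  exact (h.symm : X.ρ m (f.hom 1) = f.hom m)

lemma mk_comp {X Y : Cc} (f : X ⟶ Y) (x : X.V) : mk X x ≫ f = mk Y (f.hom x) := by
  apply Action.hom_ext
  refine ConcreteCategory.hom_ext _ _ (fun m => ?_)
  show f.hom (X.ρ m x) = Y.ρ m (f.hom x)
  exact hom_comm_apply f m x

/-- Idempotent endomorphisms of the regular act are trivial. -/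
lemma idem_endA (h : AA ⟶ AA) (hh : h ≫ h = h) : h = 𝟙 AA := by
  have hhom : ∀ m : ↥Mns, h.hom m = m * h.hom 1 := by
    intro m
    have hc := hom_comm_apply h m 1
    have h1 : AA.ρ m 1 = m := mul_one m
    rw [h1] at hc
    exact hc
  have haa : h.hom 1 * h.hom 1 = h.hom 1 := by
    have h0 : (h ≫ h).hom 1 = h.hom 1 := congrArg (fun f : AA ⟶ AA => f.hom 1) hh
    have h2 : (h ≫ h).hom 1 = h.hom (h.hom 1) := rfl
    rw [h2, hhom (h.hom 1)] at h0
    exact h0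
  have h1 : h.hom 1 = 1 := Mns.idem_eq_one _ haa
  apply Action.hom_ext
  refine ConcreteCategory.hom_ext _ _ (fun m => ?_)
  rw [hhom m, h1, mul_one]
  rfl

section Main

variable (Θ : Action (Type 0) (MonCat.of Mns) ⥤ Action (Type 0) (MonCat.of Mns))
  [Θ.IsEquivalence]

/-- Idempotent endomorphisms of `Θ.obj AA` are trivial. -/
lemma idem_endB (g : Θ.obj AA ⟶ Θ.obj AA) (hg : g ≫ g = g) : g = 𝟙 _ := by
  set E := Θ.asEquivalence with hE
  let c : AA ≅ E.inverse.obj (Θ.obj AA) := E.unitIso.app AA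
  have hcomp : (c.hom ≫ E.inverse.map g ≫ c.inv) ≫ (c.hom ≫ E.inverse.map g ≫ c.inv)
      = c.hom ≫ E.inverse.map g ≫ c.inv := by
    rw [show (c.hom ≫ E.inverse.map g ≫ c.inv) ≫ c.hom ≫ E.inverse.map g ≫ c.inv
        = c.hom ≫ (E.inverse.map g ≫ E.inverse.map g) ≫ c.inv by simp]
    rw [← E.inverse.map_comp, hg]
  have h1 : c.hom ≫ E.inverse.map g ≫ c.inv = 𝟙 AA := idem_endA _ hcomp
  have h2 : E.inverse.map g = 𝟙 _ := by
    have := congrArg (fun f => c.inv ≫ f ≫ c.hom) h1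
    simpa using this
  have h3 : E.inverse.map g = E.inverse.map (𝟙 (Θ.obj AA)) := by
    rw [h2]
    exact (E.inverse.map_id _).symm
  exact E.inverse.map_injective h3

/-- The union of all images of maps `Θ.obj AA ⟶ AA`. -/
def Aset : Set ↥Mns := {a | ∃ (u : Θ.obj AA ⟶ AA) (b : (Θ.obj AA).V), u.hom b = a}

omit [Θ.IsEquivalence] in
lemma Aset_mul (m : ↥Mns) {a : ↥Mns} (ha : a ∈ Aset Θ) : m * a ∈ Aset Θ := by
  obtain ⟨u, b, rfl⟩ := ha
  exact ⟨u, (Θ.obj AA).ρ m b, hom_comm_apply u m b⟩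

/-- The relation for the amalgamated sum of two copies of `AA` over `Aset`. -/
def qrel : (↥Mns ⊕ ↥Mns) → (↥Mns ⊕ ↥Mns) → Prop :=
  fun x y => ∃ a ∈ Aset Θ, x = Sum.inl a ∧ y = Sum.inr a

def σ (m : ↥Mns) : ↥Mns ⊕ ↥Mns → ↥Mns ⊕ ↥Mns :=
  Sum.map (fun a => m * a) (fun a => m * a)

def Qρ : ↥Mns →* CategoryTheory.End (Quot (qrel Θ)) where
  toFun m := TypeCat.ofHom (Quot.map (σ m) (by
    rintro x y ⟨a, ha, rfl, rfl⟩
    exact ⟨m * a, Aset_mul Θ m ha, rfl, rfl⟩))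
  map_one' := by
    refine ConcreteCategory.hom_ext _ _ (fun q => ?_)
    induction q using Quot.ind with
    | _ x =>
      rcases x with a | a <;>
        exact congrArg (Quot.mk _) (by simp [σ])
  map_mul' m n := by
    refine ConcreteCategory.hom_ext _ _ (fun q => ?_)
    induction q using Quot.ind with
    | _ x =>
      rcases x with a | a <;>
        exact congrArg (Quot.mk _) (by simp [σ, mul_assoc])

/-- The amalgam `AA ⊔_{Aset} AA` as an act. -/
def Qact : Cc := ⟨Quot (qrel Θ), Qρ Θ⟩

def ι₁ : AA ⟶ Qact Θ where
  hom := TypeCat.ofHom fun a : ↥Mns => Quot.mk (qrel Θ) (Sum.inl a)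
  comm := by
    intro g
    refine ConcreteCategory.hom_ext _ _ (fun a => ?_)
    rfl

def ι₂ : AA ⟶ Qact Θ where
  hom := TypeCat.ofHom fun a : ↥Mns => Quot.mk (qrel Θ) (Sum.inr a)
  comm := by
    intro g
    refine ConcreteCategory.hom_ext _ _ (fun a => ?_)
    rfl

omit [Θ.IsEquivalence] in
lemma comp_ι_eq (u : Θ.obj AA ⟶ AA) : u ≫ ι₁ Θ = u ≫ ι₂ Θ := by
  apply Action.hom_ext
  refine ConcreteCategory.hom_ext _ _ (fun b => ?_)
  exact Quot.sound ⟨u.hom b, ⟨u, b, rfl⟩, rfl, rfl⟩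

/-- `Θ.obj AA` is a generator: maps out of it jointly separate maps out of `AA`. -/
lemma cancel_B {Z : Cc} (φ ψ : AA ⟶ Z)
    (h : ∀ u : Θ.obj AA ⟶ AA, u ≫ φ = u ≫ ψ) : φ = ψ := by
  set E := Θ.asEquivalence with hE
  apply E.inverse.map_injective
  apply Action.hom_ext
  refine ConcreteCategory.hom_ext _ _ (fun p => ?_)
  let v : AA ⟶ E.inverse.obj AA := mk _ p
  have key : v ≫ E.inverse.map φ = v ≫ E.inverse.map ψ := by
    apply Θ.map_injective
    apply (cancel_mono (E.counitIso.hom.app Z)).mp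
    have hφ := E.counitIso.hom.naturality φ
    have hψ := E.counitIso.hom.naturality ψ
    simp only [Functor.id_map] at hφ hψ
    have lhs : Θ.map (v ≫ E.inverse.map φ) ≫ E.counitIso.hom.app Z
        = (Θ.map v ≫ E.counitIso.hom.app AA) ≫ φ := by
      refine (congrArg (fun f => f ≫ E.counitIso.hom.app Z) (Θ.map_comp v (E.inverse.map φ))).trans ?_
      refine (Category.assoc _ _ _).trans ?_
      refine (congrArg (fun f => Θ.map v ≫ f) hφ).trans ?_
      exact (Category.assoc _ _ _).symm
    have rhs : Θ.map (v ≫ E.inverse.map ψ) ≫ E.counitIso.hom.app Z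
        = (Θ.map v ≫ E.counitIso.hom.app AA) ≫ ψ := by
      refine (congrArg (fun f => f ≫ E.counitIso.hom.app Z) (Θ.map_comp v (E.inverse.map ψ))).trans ?_
      refine (Category.assoc _ _ _).trans ?_
      refine (congrArg (fun f => Θ.map v ≫ f) hψ).trans ?_
      exact (Category.assoc _ _ _).symm
    refine lhs.trans (Eq.trans ?_ rhs.symm)
    exact h (Θ.map v ≫ E.counitIso.hom.app AA)
  have hkey : (v ≫ E.inverse.map φ).hom 1 = (v ≫ E.inverse.map ψ).hom 1 :=
    congrArg (fun f : AA ⟶ E.inverse.obj Z => f.hom 1) key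
  have hv1 : v.hom 1 = p := mk_hom_one _ p
  have e1 : (v ≫ E.inverse.map φ).hom 1 = (E.inverse.map φ).hom p := by
    show (E.inverse.map φ).hom (v.hom 1) = _
    rw [hv1]
  have e2 : (v ≫ E.inverse.map ψ).hom 1 = (E.inverse.map ψ).hom p := by
    show (E.inverse.map ψ).hom (v.hom 1) = _
    rw [hv1]
  rw [e1, e2] at hkey
  exact hkey

lemma one_mem_Aset : (1 : ↥Mns) ∈ Aset Θ := by
  have h := cancel_B Θ (ι₁ Θ) (ι₂ Θ) (comp_ι_eq Θ)
  have h1 : Quot.mk (qrel Θ) (Sum.inl 1) = Quot.mk (qrel Θ) (Sum.inr 1) :=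
    ConcreteCategory.congr_hom (congrArg Action.Hom.hom h) 1
  let F : ↥Mns ⊕ ↥Mns → Prop := fun x => match x with
    | Sum.inl _ => True
    | Sum.inr a => a ∈ Aset Θ
  have hF : ∀ x y, qrel Θ x y → F x = F y := by
    rintro x y ⟨a, ha, rfl, rfl⟩
    show True = (a ∈ Aset Θ)
    exact (eq_true ha).symm
  have h2 : True = ((1 : ↥Mns) ∈ Aset Θ) := congrArg (Quot.lift F hF) h1
  exact cast h2 trivial

end Main

end EquivMnsAux

open EquivMnsAux in
/-- every self-equivalence `Θ` of the category of left
`M₂ⁿˢ(ℤ)`-sets satisfies `G ∘ Θ ≅ G`, where `G` is the forgetful functor. -/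
theorem equivalence_Mns_preserves_forget
    (Θ : Action (Type 0) (MonCat.of Mns) ⥤ Action (Type 0) (MonCat.of Mns))
    [Θ.IsEquivalence] :
    Nonempty (Θ ⋙ Action.forget (Type 0) (MonCat.of Mns) ≅
      Action.forget (Type 0) (MonCat.of Mns)) := by
  obtain ⟨u, b, hub⟩ := one_mem_Aset Θ
  set s : AA ⟶ Θ.obj AA := mk (Θ.obj AA) b with hs
  have hsu : s ≫ u = 𝟙 AA := by
    apply Action.hom_ext
    refine ConcreteCategory.hom_ext _ _ (fun m => ?_)
    show u.hom ((Θ.obj AA).ρ m b) = m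
    rw [hom_comm_apply u m b, AA_ρ_apply, hub, mul_one]
  have hus : u ≫ s = 𝟙 (Θ.obj AA) := by
    apply idem_endB
    rw [← Category.assoc, Category.assoc u s u, hsu, Category.comp_id]
  let fwd : ∀ X : Cc, (Θ.obj X).V → X.V :=
    fun X x => (Θ.preimage (u ≫ mk (Θ.obj X) x)).hom 1
  let bwd : ∀ X : Cc, X.V → (Θ.obj X).V :=
    fun X x => (s ≫ Θ.map (mk X x)).hom 1
  have fwd_bwd : ∀ (X : Cc) (x : X.V), fwd X (bwd X x) = x := by
    intro X x
    have h1 : mk (Θ.obj X) (bwd X x) = s ≫ Θ.map (mk X x) := mk_eval _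
    show (Θ.preimage (u ≫ mk (Θ.obj X) (bwd X x))).hom 1 = x
    rw [h1, ← Category.assoc, hus, Category.id_comp, Θ.preimage_map]
    exact mk_hom_one X x
  have bwd_fwd : ∀ (X : Cc) (x : (Θ.obj X).V), bwd X (fwd X x) = x := by
    intro X x
    have h1 : mk X (fwd X x) = Θ.preimage (u ≫ mk (Θ.obj X) x) := mk_eval _
    show (s ≫ Θ.map (mk X (fwd X x))).hom 1 = x
    rw [h1, Θ.map_preimage, ← Category.assoc, hsu, Category.id_comp]
    exact mk_hom_one _ x
  refine ⟨NatIso.ofComponents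
    (fun X => Equiv.toIso ⟨fwd X, bwd X, bwd_fwd X, fwd_bwd X⟩) ?_⟩
  intro X Y h
  refine ConcreteCategory.hom_ext _ _ (fun x => ?_)
  show fwd Y ((Θ.map h).hom x) = h.hom (fwd X x)
  have h1 : mk (Θ.obj Y) ((Θ.map h).hom x) = mk (Θ.obj X) x ≫ Θ.map h :=
    (mk_comp (Θ.map h) x).symm
  have h2 : Θ.preimage (u ≫ mk (Θ.obj X) x ≫ Θ.map h)
      = Θ.preimage (u ≫ mk (Θ.obj X) x) ≫ h := by
    apply Θ.map_injective
    rw [Θ.map_preimage, Functor.map_comp, Θ.map_preimage, Category.assoc]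
  show (Θ.preimage (u ≫ mk (Θ.obj Y) ((Θ.map h).hom x))).hom 1 = _
  rw [h1, h2]
  rfl
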